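/- (Hyers–Ulam stability) Let X and Y be real Banach spaces, ε > 0, and let f : X → Y satisfy ‖f(x+y) − f(x) − f(y)‖ ≤ ε for all x, y ∈ X. Then there exists a unique additive mapping g : X → Y (i.e. g(x+y) = g(x) + g(y) for all x, y ∈ X) such that ‖f(x) − g(x)‖ ≤ ε for all x ∈ X. -/

import Mathlib

/-- (Hyers–Ulam stability) If `f : X → Y` between real Banach spaces is approximately
additive, with additive defect at most `ε`, then there is a unique additive map `g`
uniformly within `ε` of `f`. -/
theorem hyers_ulam_stability
    {X Y : Type*} [NormedAddCommGroup X] [NormedSpace ℝ X] [CompleteSpace X]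
    [NormedAddCommGroup Y] [NormedSpace ℝ Y] [CompleteSpace Y]
    (ε : ℝ) (hε : 0 < ε) (f : X → Y)
    (hf : ∀ x y : X, ‖f (x + y) - f x - f y‖ ≤ ε) :
    ∃! g : X → Y, (∀ x y : X, g (x + y) = g x + g y) ∧ ∀ x : X, ‖f x - g x‖ ≤ ε := by
  set s : X → ℕ → Y := fun x n => ((2:ℝ)⁻¹)^n • f ((2^n : ℕ) • x) with hs
  have half_lt : (2:ℝ)⁻¹ < 1 := by norm_num
  have half_nonneg : (0:ℝ) ≤ (2:ℝ)⁻¹ := by norm_num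
  have hgeo : Filter.Tendsto (fun n : ℕ => ((2:ℝ)⁻¹)^n) Filter.atTop (nhds 0) :=
    tendsto_pow_atTop_nhds_zero_of_lt_one half_nonneg half_lt
  have hstep : ∀ (x : X) (n : ℕ), ‖s x n - s x (n+1)‖ ≤ (ε/2) * ((2:ℝ)⁻¹)^n := by
    intro x n
    have hz : ((2^(n+1) : ℕ) • x) = (2^n : ℕ) • x + (2^n : ℕ) • x := by
      rw [← add_nsmul]; ring_nf
    set z := (2^n : ℕ) • x with hzdef
    have h1 : s x n = ((2:ℝ)⁻¹)^(n+1) • ((2:ℝ) • f z) := by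
      simp only [hs, smul_smul]
      congr 1
      ring
    have h2 : s x n - s x (n+1) = ((2:ℝ)⁻¹)^(n+1) • ((2:ℝ) • f z - f (z + z)) := by
      rw [h1, smul_sub]
      simp only [hs, hz]
    rw [h2, norm_smul]
    have h3 : ‖(2:ℝ) • f z - f (z + z)‖ ≤ ε := by
      have := hf z z
      have heq : (2:ℝ) • f z - f (z + z) = -(f (z + z) - f z - f z) := by
        rw [two_smul]; abel
      rw [heq, norm_neg]; exact this
    have h4 : ‖((2:ℝ)⁻¹)^(n+1)‖ = (ε/2 * ((2:ℝ)⁻¹)^n) / ε := by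
      rw [Real.norm_of_nonneg (by positivity)]
      field_simp
      ring
    rw [h4]
    calc (ε/2 * ((2:ℝ)⁻¹)^n) / ε * ‖(2:ℝ) • f z - f (z+z)‖
        ≤ (ε/2 * ((2:ℝ)⁻¹)^n) / ε * ε := by
          apply mul_le_mul_of_nonneg_left h3
          positivity
      _ = ε/2 * ((2:ℝ)⁻¹)^n := by field_simp
  have hcauchy : ∀ x : X, CauchySeq (s x) := by
    intro x
    apply cauchySeq_of_le_geometric (2:ℝ)⁻¹ (ε/2) half_lt
    intro n
    rw [dist_eq_norm]
    exact hstep x n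
  have hlim : ∀ x : X, ∃ a : Y, Filter.Tendsto (s x) Filter.atTop (nhds a) := fun x =>
    cauchySeq_tendsto_of_complete (hcauchy x)
  choose g hg using hlim
  -- additivity
  have hadd : ∀ x y : X, g (x + y) = g x + g y := by
    intro x y
    have hdiff : Filter.Tendsto (fun n => s (x+y) n - s x n - s y n) Filter.atTop
        (nhds (g (x+y) - g x - g y)) := ((hg (x+y)).sub (hg x)).sub (hg y)
    have hzero : Filter.Tendsto (fun n => s (x+y) n - s x n - s y n) Filter.atTop (nhds 0) := by
      apply squeeze_zero_norm (a := fun n => ε * ((2:ℝ)⁻¹)^n)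
      · intro n
        have heq : s (x+y) n - s x n - s y n
            = ((2:ℝ)⁻¹)^n • (f ((2^n : ℕ) • x + (2^n : ℕ) • y) - f ((2^n : ℕ) • x) - f ((2^n : ℕ) • y)) := by
          simp only [hs, smul_add, ← smul_sub]
        rw [heq, norm_smul, norm_pow, norm_inv, Real.norm_ofNat]
        calc ((2:ℝ)⁻¹)^n * ‖f ((2^n : ℕ) • x + (2^n : ℕ) • y) - f ((2^n : ℕ) • x) - f ((2^n : ℕ) • y)‖
            ≤ ((2:ℝ)⁻¹)^n * ε := by
              apply mul_le_mul_of_nonneg_left (hf _ _); positivity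
          _ = ε * ((2:ℝ)⁻¹)^n := by ring
      · simpa using hgeo.const_mul ε
    have h0 := tendsto_nhds_unique hdiff hzero
    have h1 : g (x+y) - (g x + g y) = 0 := by rw [← h0]; abel
    exact sub_eq_zero.mp h1
  -- bound
  have hboundn : ∀ (x : X) (n : ℕ), ‖f x - s x n‖ ≤ ε - ε * ((2:ℝ)⁻¹)^n := by
    intro x n
    induction n with
    | zero => simp [hs]
    | succ n ih =>
      calc ‖f x - s x (n+1)‖ ≤ ‖f x - s x n‖ + ‖s x n - s x (n+1)‖ := by
            have : f x - s x (n+1) = (f x - s x n) + (s x n - s x (n+1)) := by abel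
            rw [this]; exact norm_add_le _ _
        _ ≤ (ε - ε * ((2:ℝ)⁻¹)^n) + (ε/2) * ((2:ℝ)⁻¹)^n := add_le_add ih (hstep x n)
        _ = ε - ε * ((2:ℝ)⁻¹)^(n+1) := by rw [pow_succ]; ring
  have hbound : ∀ x : X, ‖f x - g x‖ ≤ ε := by
    intro x
    have ht : Filter.Tendsto (fun n => ‖f x - s x n‖) Filter.atTop (nhds ‖f x - g x‖) :=
      (Filter.Tendsto.sub tendsto_const_nhds (hg x)).norm
    apply le_of_tendsto ht
    filter_upwards with n
    calc ‖f x - s x n‖ ≤ ε - ε * ((2:ℝ)⁻¹)^n := hboundn x n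
      _ ≤ ε := by nlinarith [pow_nonneg half_nonneg n]
  refine ⟨g, ⟨hadd, hbound⟩, ?_⟩
  -- uniqueness
  intro g₁ ⟨hadd₁, hb₁⟩
  have nsmul_of_add : ∀ (h : X → Y), (∀ x y, h (x+y) = h x + h y) → ∀ (n : ℕ) (x : X), h (n • x) = n • h x := by
    intro h hh n x
    induction n with
    | zero =>
      have h0 : h 0 = h 0 + h 0 := by simpa using hh 0 0
      have hz0 : h 0 = 0 := add_eq_left.mp h0.symm
      simpa using hz0
    | succ n ih =>
      rw [succ_nsmul, hh, ih, succ_nsmul]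
  funext x
  have key : ∀ n : ℕ, ‖g₁ x - g x‖ ≤ (2*ε) * ((2:ℝ)⁻¹)^n := by
    intro n
    have e1 : g₁ ((2^n : ℕ) • x) = (2^n : ℕ) • g₁ x := nsmul_of_add g₁ hadd₁ _ x
    have e2 : g ((2^n : ℕ) • x) = (2^n : ℕ) • g x := nsmul_of_add g hadd _ x
    have h2 : ‖g₁ ((2^n : ℕ) • x) - g ((2^n : ℕ) • x)‖ ≤ 2*ε := by
      calc ‖g₁ ((2^n : ℕ) • x) - g ((2^n : ℕ) • x)‖
          ≤ ‖f ((2^n : ℕ) • x) - g₁ ((2^n : ℕ) • x)‖ + ‖f ((2^n : ℕ) • x) - g ((2^n : ℕ) • x)‖ := by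
            rw [← norm_neg (f _ - g₁ _)]
            have : g₁ ((2^n:ℕ)•x) - g ((2^n:ℕ)•x) = -(f ((2^n:ℕ)•x) - g₁ ((2^n:ℕ)•x)) + (f ((2^n:ℕ)•x) - g ((2^n:ℕ)•x)) := by abel
            rw [this]; exact norm_add_le _ _
        _ ≤ ε + ε := add_le_add (hb₁ _) (hbound _)
        _ = 2*ε := by ring
    have h3 : ‖(2^n : ℕ) • (g₁ x - g x)‖ = (2:ℝ)^n * ‖g₁ x - g x‖ := by
      rw [← Nat.cast_smul_eq_nsmul ℝ, norm_smul]
      norm_num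
    have h4 : (2^n : ℕ) • (g₁ x - g x) = g₁ ((2^n : ℕ) • x) - g ((2^n : ℕ) • x) := by
      rw [smul_sub, e1, e2]
    have h5 : (2:ℝ)^n * ‖g₁ x - g x‖ ≤ 2*ε := by rw [← h3, h4]; exact h2
    have hp : (0:ℝ) < (2:ℝ)^n := by positivity
    calc ‖g₁ x - g x‖ = ((2:ℝ)^n * ‖g₁ x - g x‖) * ((2:ℝ)⁻¹)^n := by
          rw [inv_pow]; field_simp
      _ ≤ (2*ε) * ((2:ℝ)⁻¹)^n := by
          apply mul_le_mul_of_nonneg_right h5; positivity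
  have hle : ‖g₁ x - g x‖ ≤ 0 := by
    have ht : Filter.Tendsto (fun n : ℕ => (2*ε) * ((2:ℝ)⁻¹)^n) Filter.atTop (nhds 0) := by
      simpa using hgeo.const_mul (2*ε)
    exact ge_of_tendsto ht (Filter.Eventually.of_forall key)
  have hsub : g₁ x - g x = 0 := norm_le_zero_iff.mp hle
  exact sub_eq_zero.mp hsub
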